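/- There exists a semigroup S with exactly 10 elements such that: (i) S satisfies the identity x·y·z·x·y = x·y for all x, y, z ∈ S; and (ii) there exist x, y ∈ S with x·y·y ≠ x·y and y·y·x ≠ y·x. In other words, there is a 10-element semigroup in GRB that is not in the class A. -/
import Mathlib

/-- A 10-element semigroup: element 0 is a generator `b`, elements 1..9 encode
pairs (l,r) ∈ (Fin 3 × Fin 3) of a rectangular band as 1+3l+r, with `b` acting
via l ↦ A l on the left and r ↦ C r on the right, where A = C = [1,2,2]. -/
def grbMul : Fin 10 → Fin 10 → Fin 10 := fun x y =>
  let act : ℕ → ℕ := fun i => if i = 0 then 1 else 2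
  let n : ℕ :=
    if x.val = 0 ∧ y.val = 0 then 9
    else if x.val = 0 then 1 + 3 * act ((y.val - 1) / 3) + (y.val - 1) % 3
    else if y.val = 0 then 1 + 3 * ((x.val - 1) / 3) + act ((x.val - 1) % 3)
    else 1 + 3 * ((x.val - 1) / 3) + (y.val - 1) % 3
  ⟨n % 10, Nat.mod_lt _ (by norm_num)⟩

theorem stmt_16 :
    ∃ (S : Type) (_ : Semigroup S) (_ : Fintype S),
      Fintype.card S = 10 ∧
      (∀ x y z : S, x * y * z * x * y = x * y) ∧
      (∃ x y : S, x * y * y ≠ x * y ∧ y * y * x ≠ y * x) := by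
  refine ⟨Fin 10, { mul := grbMul, mul_assoc := by decide }, inferInstance, by simp, by decide,
    ⟨1, 0, by decide⟩⟩
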